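/- Let λ > 0 be real, let p be a positive integer with 2pλ ≤ √3. Then the head sum J_{[1,p]} = ∑_{j=1}^{p} v(j,λ) satisfies the two-sided sandwich: −(p−1)·exp(−2(p−1)²λ²) + v(p,λ) ≤ J_{[1,p]} ≤ exp(−2λ²) − p·exp(−2p²λ²) + v(p,λ), where v(r,λ) = (4r²λ² − 1)·exp(−2r²λ²). -/

import Mathlib

noncomputable def v (r l : ℝ) : ℝ := (4 * r ^ 2 * l ^ 2 - 1) * Real.exp (-2 * r ^ 2 * l ^ 2)

lemma hasDerivAt_F (l r : ℝ) :
    HasDerivAt (fun x : ℝ => -x * Real.exp (-2 * x ^ 2 * l ^ 2)) (v r l) r := by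
  have h1 : HasDerivAt (fun x : ℝ => -2 * x ^ 2 * l ^ 2) (-4 * r * l ^ 2) r := by
    have := ((hasDerivAt_pow 2 r).const_mul (-2)).mul_const (l ^ 2)
    exact this.congr_deriv (by ring)
  have h2 : HasDerivAt (fun x : ℝ => Real.exp (-2 * x ^ 2 * l ^ 2))
      (Real.exp (-2 * r ^ 2 * l ^ 2) * (-4 * r * l ^ 2)) r := h1.exp
  have h3 := ((hasDerivAt_id r).neg).mul h2
  refine h3.congr_deriv ?_
  simp [v]; ring

lemma hasDerivAt_v (l r : ℝ) :
    HasDerivAt (fun x : ℝ => v x l)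
      (4 * r * l ^ 2 * (3 - 4 * r ^ 2 * l ^ 2) * Real.exp (-2 * r ^ 2 * l ^ 2)) r := by
  have h1 : HasDerivAt (fun x : ℝ => -2 * x ^ 2 * l ^ 2) (-4 * r * l ^ 2) r := by
    have := ((hasDerivAt_pow 2 r).const_mul (-2)).mul_const (l ^ 2)
    exact this.congr_deriv (by ring)
  have h2 : HasDerivAt (fun x : ℝ => Real.exp (-2 * x ^ 2 * l ^ 2))
      (Real.exp (-2 * r ^ 2 * l ^ 2) * (-4 * r * l ^ 2)) r := h1.exp
  have h0 : HasDerivAt (fun x : ℝ => 4 * x ^ 2 * l ^ 2 - 1) (8 * r * l ^ 2) r := by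
    have := (((hasDerivAt_pow 2 r).const_mul 4).mul_const (l ^ 2)).sub_const 1
    exact this.congr_deriv (by ring)
  have := h0.mul h2
  exact this.congr_deriv (by ring)

lemma v_cont (l : ℝ) : Continuous fun x : ℝ => v x l := by
  unfold v; fun_prop

lemma v_mono (l : ℝ) (c : ℝ) (hc : 4 * c ^ 2 * l ^ 2 ≤ 3) :
    MonotoneOn (fun x : ℝ => v x l) (Set.Icc 0 c) := by
  apply monotoneOn_of_deriv_nonneg (convex_Icc 0 c) (v_cont l).continuousOn
  · intro x hx
    exact (hasDerivAt_v l x).differentiableAt.differentiableWithinAt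
  · intro x hx
    rw [interior_Icc] at hx
    rw [(hasDerivAt_v l x).deriv]
    have hx0 : 0 ≤ x := hx.1.le
    have hxc : x ≤ c := hx.2.le
    have hsq : (0:ℝ) ≤ l ^ 2 := sq_nonneg l
    have hx2 : x ^ 2 ≤ c ^ 2 := pow_le_pow_left₀ hx0 hxc 2
    have h1 : 4 * x ^ 2 * l ^ 2 ≤ 4 * c ^ 2 * l ^ 2 := by nlinarith
    have h2 : (0:ℝ) ≤ 3 - 4 * x ^ 2 * l ^ 2 := by linarith
    have h3 : (0:ℝ) ≤ 4 * x * l ^ 2 := by positivity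
    exact mul_nonneg (mul_nonneg h3 h2) (Real.exp_pos _).le

/-- Head sandwich: for `λ > 0` and a positive integer `p` with `2pλ ≤ √3`, the head sum
`J_{[1,p]} = ∑_{j=1}^p v(j,λ)` satisfies
`-(p-1)·exp(-2(p-1)²λ²) + v(p,λ) ≤ J_{[1,p]} ≤ exp(-2λ²) - p·exp(-2p²λ²) + v(p,λ)`. -/
theorem stmt_18 (l : ℝ) (hl : 0 < l) (p : ℕ) (hp : 0 < p)
    (h : 2 * p * l ≤ Real.sqrt 3) :
    -((p : ℝ) - 1) * Real.exp (-2 * ((p : ℝ) - 1) ^ 2 * l ^ 2) + v p l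
      ≤ (∑ j ∈ Finset.Icc 1 p, v j l) ∧
    (∑ j ∈ Finset.Icc 1 p, v j l)
      ≤ Real.exp (-2 * l ^ 2) - p * Real.exp (-2 * (p : ℝ) ^ 2 * l ^ 2) + v p l := by
  obtain ⟨m, rfl⟩ : ∃ m, p = m + 1 := ⟨p - 1, (Nat.succ_pred_eq_of_pos hp).symm⟩
  have hm : ((m + 1 : ℕ) : ℝ) = (m : ℝ) + 1 := by push_cast; ring
  rw [hm] at h
  have hmn : (0:ℝ) ≤ (m : ℝ) := Nat.cast_nonneg m
  -- 4(m+1)²l² ≤ 3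
  have hc3 : 4 * ((m:ℝ) + 1) ^ 2 * l ^ 2 ≤ 3 := by
    have hs : Real.sqrt 3 ^ 2 = 3 := Real.sq_sqrt (by norm_num)
    have hL : (0:ℝ) ≤ 2 * ((m:ℝ) + 1) * l := by positivity
    nlinarith [mul_self_le_mul_self hL h]
  have hmono : MonotoneOn (fun x : ℝ => v x l) (Set.Icc 0 ((m:ℝ) + 1)) := v_mono l _ hc3
  -- integral formula
  have hint : ∀ a b : ℝ, (∫ x in a..b, v x l) =
      -b * Real.exp (-2 * b ^ 2 * l ^ 2) - (-a * Real.exp (-2 * a ^ 2 * l ^ 2)) :=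
    fun a b => intervalIntegral.integral_eq_sub_of_hasDerivAt
      (fun x _ => hasDerivAt_F l x) ((v_cont l).intervalIntegrable a b)
  -- sum decomposition
  have hsum : (∑ j ∈ Finset.Icc 1 (m + 1), v j l)
      = (∑ i ∈ Finset.range m, v ((i:ℝ) + 1) l) + v ((m:ℝ) + 1) l := by
    rw [Finset.sum_Icc_succ_top (by omega), ← Finset.Ico_add_one_right_eq_Icc, Finset.sum_Ico_eq_sum_range]
    simp only [Nat.add_sub_cancel, hm]
    congr 1
    apply Finset.sum_congr rfl
    intro i _
    push_cast
    ring
  constructor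
  · -- lower bound
    have hlo := (hmono.mono (Set.Icc_subset_Icc le_rfl (by linarith))).integral_le_sum
      (x₀ := 0) (a := m)
    rw [zero_add, hint] at hlo
    have hsum2 : (∑ i ∈ Finset.range m, v ((0:ℝ) + ↑(i + 1)) l)
        = ∑ i ∈ Finset.range m, v ((i:ℝ) + 1) l := by
      apply Finset.sum_congr rfl; intro i _; push_cast; ring_nf
    rw [hsum2] at hlo
    rw [hsum, hm]
    have : -(((m:ℝ) + 1) - 1) * Real.exp (-2 * (((m:ℝ) + 1) - 1) ^ 2 * l ^ 2)
        = -(m:ℝ) * Real.exp (-2 * (m:ℝ) ^ 2 * l ^ 2) - -0 * Real.exp (-2 * 0 ^ 2 * l ^ 2) := by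
      ring_nf
    rw [this]
    linarith
  · -- upper bound
    have hhi := (hmono.mono (Set.Icc_subset_Icc (by norm_num) (by linarith))).sum_le_integral
      (x₀ := 1) (a := m)
    rw [hint] at hhi
    have hsum2 : (∑ i ∈ Finset.range m, v ((1:ℝ) + (i:ℕ)) l)
        = ∑ i ∈ Finset.range m, v ((i:ℝ) + 1) l := by
      apply Finset.sum_congr rfl; intro i _; push_cast; ring_nf
    rw [hsum2] at hhi
    rw [hsum, hm]
    have : Real.exp (-2 * l ^ 2) - ((m:ℝ) + 1) * Real.exp (-2 * ((m:ℝ) + 1) ^ 2 * l ^ 2)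
        = -(1 + (m:ℝ)) * Real.exp (-2 * (1 + (m:ℝ)) ^ 2 * l ^ 2)
          - -1 * Real.exp (-2 * 1 ^ 2 * l ^ 2) := by ring_nf
    rw [this]
    linarith
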